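/- arXiv:1304.5636 — 4 statements merged into one kernel-verified Lean document; each statement's English description precedes it below -/
import Mathlib

section
/- Let ρ̄' ∈ C⁰ have compact support in ℝ and suppose ∫_ℝ ρ̄'(x) dx > 0. Then the supremum over nonzero ψ ∈ H¹(ℝ) of (∫_ℝ g ρ̄' |ψ|² dx) / (∫_ℝ |ψ'|² dx) is +∞ (i.e., for every C > 0 there exists ψ ∈ H¹(ℝ), ψ ≢ 0, with ∫ g ρ̄' ψ² dx > C ∫ |ψ'|² dx). -/
open MeasureTheory

section Aux
open Set


lemma intInt (s : Set ℝ) (hs : MeasurableSet s) (k a b : ℝ) :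
    IntervalIntegrable (s.indicator (fun _ => k)) volume a b := by
  constructor <;>
    exact ((integrableOn_const measure_Ioc_lt_top.ne).indicator hs)

lemma iic_primitive (c k x : ℝ) :
    ∫ t in (0:ℝ)..x, (Iic c).indicator (fun _ => k) t = k * (min x c - min 0 c) := by
  rcases le_total 0 x with h | h
  · rw [intervalIntegral.integral_of_le h, setIntegral_indicator measurableSet_Iic,
      Ioc_inter_Iic, setIntegral_const, Real.volume_real_Ioc, smul_eq_mul,
      show max (min x c - 0) 0 = min x c - min 0 c by
        rcases le_total 0 c with hc | hc <;> rcases le_total x c with h2 | h2 <;>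
          simp [min_def, max_def] <;> split_ifs <;> linarith,
      mul_comm]
  · rw [intervalIntegral.integral_symm, intervalIntegral.integral_of_le h,
      setIntegral_indicator measurableSet_Iic, Ioc_inter_Iic, setIntegral_const,
      Real.volume_real_Ioc, smul_eq_mul,
      show max (min 0 c - x) 0 = -(min x c - min 0 c) by
        rcases le_total 0 c with hc | hc <;> rcases le_total x c with h2 | h2 <;>
          simp [min_def, max_def] <;> split_ifs <;> linarith]
    ring

lemma ioc_primitive (a b k x : ℝ) (hab : a ≤ b) :
    ∫ t in (0:ℝ)..x, (Ioc a b).indicator (fun _ => k) t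
      = k * ((min x b - min 0 b) - (min x a - min 0 a)) := by
  have key : ∀ t ∈ uIcc (0:ℝ) x, (Ioc a b).indicator (fun _ => k) t
      = (Iic b).indicator (fun _ => k) t - (Iic a).indicator (fun _ => k) t := by
    intro t _
    by_cases h1 : t ≤ a
    · simp [Set.indicator, h1, h1.trans hab, not_lt.2 h1]
    · push_neg at h1
      by_cases h2 : t ≤ b <;> simp [Set.indicator, h1, h2, not_le.2 h1]
  rw [intervalIntegral.integral_congr key,
    intervalIntegral.integral_sub (intInt _ measurableSet_Iic _ _ _)
      (intInt _ measurableSet_Iic _ _ _), iic_primitive, iic_primitive]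
  ring

end Aux

/-- `ψ ∈ H¹(ℝ)` with weak derivative `ψ'`: both are square-integrable and `ψ` is the
absolutely continuous function obtained by integrating `ψ'`. -/
def IsH1 (ψ ψ' : ℝ → ℝ) : Prop :=
  MemLp ψ 2 volume ∧ MemLp ψ' 2 volume ∧
    ∀ x : ℝ, ψ x = ψ 0 + ∫ t in (0:ℝ)..x, ψ' t

open Set in
/-- If `ρ̄' ∈ C⁰_c(ℝ)` and `∫ ρ̄' > 0`, then
`sup_{ψ ∈ H¹(ℝ), ψ ≢ 0} (∫ g ρ̄' ψ²)/(∫ |ψ'|²) = +∞`: for every `C > 0` there is a nonzero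
`ψ ∈ H¹(ℝ)` with `∫ g ρ̄' ψ² > C ∫ |ψ'|²`. -/
theorem statement0 (g : ℝ) (hg : 0 < g) (ρ' : ℝ → ℝ)
    (hcont : Continuous ρ') (hsupp : HasCompactSupport ρ')
    (hpos : 0 < ∫ x, ρ' x) :
    ∀ C > 0, ∃ ψ ψ' : ℝ → ℝ, IsH1 ψ ψ' ∧ ψ ≠ 0 ∧
      C * (∫ x, (ψ' x) ^ 2) < ∫ x, g * ρ' x * (ψ x) ^ 2 := by
  intro C hC
  obtain ⟨R, hR0, hR⟩ : ∃ R > 0, tsupport ρ' ⊆ Icc (-R) R := by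
    obtain ⟨r, hr⟩ := hsupp.isBounded.subset_closedBall 0
    refine ⟨|r| + 1, by positivity, fun x hx => ?_⟩
    have := hr hx
    rw [Real.closedBall_eq_Icc] at this
    constructor <;> [skip; skip] <;>
      · have h1 := this.1; have h2 := this.2
        have := le_abs_self r; have := neg_abs_le r
        simp only [zero_sub, zero_add] at h1 h2 ⊢ <;> linarith
  set I := ∫ x, ρ' x with hIdef
  have hgI : 0 < g * I := mul_pos hg hpos
  set L : ℝ := 2 * C / (g * I) + 1 with hLdef
  have hL : 0 < L := by positivity
  set ψ' : ℝ → ℝ := fun t =>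
    (Ioc (-(R+L)) (-R)).indicator (fun _ => L⁻¹) t
      - (Ioc R (R+L)).indicator (fun _ => L⁻¹) t with hψ'def
  set ψ : ℝ → ℝ := fun x => 1 + ∫ t in (0:ℝ)..x, ψ' t with hψdef
  have hprim : ∀ x : ℝ, ∫ t in (0:ℝ)..x, ψ' t
      = L⁻¹ * ((min x (-R) - min 0 (-R)) - (min x (-(R+L)) - min 0 (-(R+L))))
        - L⁻¹ * ((min x (R+L) - min 0 (R+L)) - (min x R - min 0 R)) := by
    intro x
    rw [hψ'def]
    rw [intervalIntegral.integral_sub (intInt _ measurableSet_Ioc _ _ _)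
        (intInt _ measurableSet_Ioc _ _ _),
      ioc_primitive _ _ _ _ (by linarith), ioc_primitive _ _ _ _ (by linarith)]
  have hmin1 : min (0:ℝ) (-R) = -R := min_eq_right (by linarith)
  have hmin2 : min (0:ℝ) (-(R+L)) = -(R+L) := min_eq_right (by linarith)
  have hmin3 : min (0:ℝ) (R+L) = 0 := min_eq_left (by linarith)
  have hmin4 : min (0:ℝ) R = 0 := min_eq_left (by linarith)
  have hψ1 : ∀ x ∈ Icc (-R) R, ψ x = 1 := by
    intro x hx
    rw [hψdef]
    simp only
    rw [hprim, hmin1, hmin2, hmin3, hmin4,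
      min_eq_right hx.1, min_eq_right (by linarith [hx.1, hL]),
      min_eq_left (by linarith [hx.2, hL]), min_eq_left hx.2]
    ring
  have hψ0 : ∀ x, x ∉ Icc (-(R+L)) (R+L) → ψ x = 0 := by
    intro x hx
    rw [mem_Icc, not_and_or, not_le, not_le] at hx
    rw [hψdef]; simp only
    rw [hprim, hmin1, hmin2, hmin3, hmin4]
    rcases hx with hx | hx
    · rw [min_eq_left (by linarith), min_eq_left (by linarith),
        min_eq_left (by linarith), min_eq_left (by linarith)]
      field_simp
      ring
    · rw [min_eq_right (by linarith), min_eq_right (by linarith),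
        min_eq_right (by linarith), min_eq_right (by linarith)]
      field_simp
      ring
  have hψcont : Continuous ψ := by
    have : ψ = fun x =>
        1 + (L⁻¹ * ((min x (-R) - min 0 (-R)) - (min x (-(R+L)) - min 0 (-(R+L))))
          - L⁻¹ * ((min x (R+L) - min 0 (R+L)) - (min x R - min 0 R))) := by
      funext x; rw [hψdef]; simp only [hprim]
    rw [this]
    fun_prop
  have hψsupp : HasCompactSupport ψ :=
    HasCompactSupport.intro isCompact_Icc hψ0
  have memψ : MemLp ψ 2 volume := hψcont.memLp_of_hasCompactSupport (μ := volume) hψsupp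
  have memψ' : MemLp ψ' 2 volume :=
    (memLp_indicator_const 2 measurableSet_Ioc L⁻¹ (Or.inr measure_Ioc_lt_top.ne)).sub
      (memLp_indicator_const 2 measurableSet_Ioc L⁻¹ (Or.inr measure_Ioc_lt_top.ne))
  have hψ0val : ψ 0 = 1 := by
    rw [hψdef]; simp [intervalIntegral.integral_same]
  refine ⟨ψ, ψ', ⟨memψ, memψ', fun x => by rw [hψ0val, hψdef]⟩, ?_, ?_⟩
  · intro h
    have := congrFun h 0
    rw [hψ0val] at this
    simp at this
  · have hsq : (fun x => (ψ' x) ^ 2) = fun x =>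
        (Ioc (-(R+L)) (-R)).indicator (fun _ => L⁻¹^2) x
          + (Ioc R (R+L)).indicator (fun _ => L⁻¹^2) x := by
      funext x
      simp only [hψ'def, Set.indicator]
      split_ifs with h1 h2 h2
      · exfalso; linarith [h1.2, h2.1]
      · ring
      · ring
      · ring
    have hint : ∀ a b : ℝ, Integrable ((Ioc a b).indicator (fun _ => L⁻¹^2)) volume :=
      fun a b => (integrable_indicator_iff measurableSet_Ioc).2
        (integrableOn_const measure_Ioc_lt_top.ne)
    have hval : ∫ x, (ψ' x) ^ 2 = 2 / L := by
      rw [hsq, integral_add (hint _ _) (hint _ _), integral_indicator_const _ measurableSet_Ioc,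
        integral_indicator_const _ measurableSet_Ioc, Real.volume_real_Ioc, Real.volume_real_Ioc,
        show -R - -(R+L) = L by ring, show R + L - R = L by ring,
        max_eq_left hL.le, smul_eq_mul]
      field_simp
      ring
    have hval2 : ∫ x, g * ρ' x * (ψ x) ^ 2 = g * I := by
      have : (fun x => g * ρ' x * (ψ x) ^ 2) = fun x => g * ρ' x := by
        funext x
        by_cases hx : x ∈ tsupport ρ'
        · rw [hψ1 x (hR hx)]; ring
        · rw [image_eq_zero_of_notMem_tsupport hx]; ring
      rw [this, integral_const_mul]
    rw [hval, hval2]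
    rw [show C * (2 / L) = 2 * C / L by ring, div_lt_iff₀ hL]
    have : g * I * L = 2 * C + g * I := by
      rw [hLdef]; field_simp
    rw [this]
    linarith
end

section
/- Let ρ̄' ∈ C⁰ have compact support in ℝ and suppose ∫_ℝ ρ̄'(x) dx < 0. Then the supremum over nonzero ψ ∈ H¹(ℝ) of (∫_ℝ g ρ̄' |ψ|² dx)/(∫_ℝ |ψ'|² dx) is finite; equivalently, there exists C > 0 such that ∫_ℝ g ρ̄' ψ² dx ≤ C ∫_ℝ |ψ'|² dx for all ψ ∈ H¹(ℝ). -/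
open MeasureTheory

/-- If `ρ̄' ∈ C⁰_c(ℝ)` and `∫ ρ̄' < 0`, then the critical number is finite: there is `C > 0`
with `∫ g ρ̄' ψ² ≤ C ∫ |ψ'|²` for all `ψ ∈ H¹(ℝ)`. -/
theorem statement1 (g : ℝ) (hg : 0 < g) (ρ' : ℝ → ℝ)
    (hcont : Continuous ρ') (hsupp : HasCompactSupport ρ')
    (hneg : (∫ x, ρ' x) < 0) :
    ∃ C > 0, ∀ ψ ψ' : ℝ → ℝ, IsH1 ψ ψ' →
      (∫ x, g * ρ' x * (ψ x) ^ 2) ≤ C * ∫ x, (ψ' x) ^ 2 := by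
  obtain ⟨R, hR0, hRsub⟩ := hsupp.isBounded.subset_closedBall_lt 0 0
  set I := ∫ x, ρ' x with hIdef
  have hmI : 0 < -I := by linarith
  have hρint : Integrable ρ' := hcont.integrable_of_hasCompactSupport hsupp
  set L := ∫ x, |ρ' x| with hLdef
  have hLI : -I ≤ L := by
    have h := norm_integral_le_integral_norm (f := ρ') (μ := volume)
    simp only [Real.norm_eq_abs] at h
    calc -I ≤ |I| := neg_le_abs I
    _ ≤ L := h
  have hLpos : 0 < L := lt_of_lt_of_le hmI hLI
  refine ⟨g * R * (L ^ 2 / (-I) + L), by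
    exact mul_pos (mul_pos hg hR0)
      (add_pos (div_pos (pow_pos hLpos 2) hmI) hLpos), ?_⟩
  rintro ψ ψ' ⟨hψ2, hψ'2, hrep⟩
  set D := ∫ x, ψ' x ^ 2 with hDdef
  have hD0 : 0 ≤ D := integral_nonneg fun x => sq_nonneg _
  have hψ'sq : Integrable (fun x => ψ' x ^ 2) := hψ'2.integrable_sq
  -- interval integrability of ψ'
  have hψ'ii : ∀ u v : ℝ, IntervalIntegrable ψ' volume u v := by
    intro u v
    rw [intervalIntegrable_iff]
    have : Fact (volume (Set.uIoc u v) < ⊤) := ⟨by rw [Set.uIoc]; exact measure_Ioc_lt_top⟩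
    exact (hψ'2.restrict _).integrable one_le_two
  set r : ℝ → ℝ := fun x => ∫ t in (0:ℝ)..x, ψ' t with hrdef
  have hrcont : Continuous r := intervalIntegral.continuous_primitive hψ'ii 0
  set a := ψ 0 with hadef
  have hψeq : ∀ x, ψ x = a + r x := hrep
  -- Cauchy–Schwarz bound on r over the support
  have key : ∀ x : ℝ, |x| ≤ R → (r x) ^ 2 ≤ R * D := by
    intro x hx
    have hfin : Fact (volume (Set.uIoc 0 x) < ⊤) := ⟨by rw [Set.uIoc]; exact measure_Ioc_lt_top⟩
    have h1 : |r x| ≤ ∫ t in Set.uIoc 0 x, |ψ' t| := by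
      simpa [Real.norm_eq_abs] using
        intervalIntegral.norm_integral_le_integral_norm_uIoc (a := 0) (b := x) (f := ψ')
          (μ := volume)
    have hconj : Real.HolderConjugate 2 2 := ⟨by norm_num, by norm_num, by norm_num⟩
    have hmem1 : MemLp (fun t => |ψ' t|) (ENNReal.ofReal 2) (volume.restrict (Set.uIoc 0 x)) := by
      have := (hψ'2.restrict (Set.uIoc 0 x)).norm
      simpa [Real.norm_eq_abs] using this
    have hmem2 : MemLp (fun _ : ℝ => (1:ℝ)) (ENNReal.ofReal 2)
        (volume.restrict (Set.uIoc 0 x)) := by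
      simpa using memLp_const (μ := volume.restrict (Set.uIoc 0 x)) (1:ℝ)
    have h2 := integral_mul_le_Lp_mul_Lq_of_nonneg hconj
      (Filter.Eventually.of_forall fun t => abs_nonneg _)
      (Filter.Eventually.of_forall fun _ => zero_le_one) hmem1 hmem2
    simp only [mul_one] at h2
    have e1 : ∫ t in Set.uIoc 0 x, |ψ' t| ^ (2:ℝ) = ∫ t in Set.uIoc 0 x, (ψ' t) ^ 2 := by
      refine integral_congr_ae (Filter.Eventually.of_forall fun t => ?_)
      show |ψ' t| ^ (2:ℝ) = (ψ' t) ^ 2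
      rw [show (2:ℝ) = ((2:ℕ):ℝ) by norm_num, Real.rpow_natCast, sq_abs]
    have e2 : ∫ t in Set.uIoc 0 x, (1:ℝ) ^ (2:ℝ) = |x| := by
      simp only [Real.one_rpow, setIntegral_const, smul_eq_mul, mul_one]
      rw [Set.uIoc, measureReal_def, Real.volume_Ioc,
        ENNReal.toReal_ofReal (by rw [max_sub_min_eq_abs]; positivity),
        max_sub_min_eq_abs]
      rw [abs_sub_comm]
      simp
    rw [e1, e2] at h2
    set A := ∫ t in Set.uIoc 0 x, (ψ' t) ^ 2 with hAdef
    have hA0 : 0 ≤ A := integral_nonneg fun t => sq_nonneg _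
    have hAD : A ≤ D := setIntegral_le_integral hψ'sq
      (Filter.Eventually.of_forall fun t => sq_nonneg _)
    have h3 : |r x| ≤ Real.sqrt A * Real.sqrt |x| := by
      calc |r x| ≤ A ^ (1/(2:ℝ)) * |x| ^ (1/(2:ℝ)) := le_trans h1 h2
      _ = Real.sqrt A * Real.sqrt |x| := by
        rw [Real.sqrt_eq_rpow, Real.sqrt_eq_rpow]
    have h4 : (r x) ^ 2 ≤ (Real.sqrt A * Real.sqrt |x|) ^ 2 := by
      rw [← sq_abs (r x)]
      exact pow_le_pow_left₀ (abs_nonneg _) h3 2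
    have h5 : (Real.sqrt A * Real.sqrt |x|) ^ 2 = A * |x| := by
      rw [mul_pow, Real.sq_sqrt hA0, Real.sq_sqrt (abs_nonneg _)]
    rw [h5] at h4
    calc (r x) ^ 2 ≤ A * |x| := h4
    _ ≤ D * R := mul_le_mul hAD hx (abs_nonneg _) hD0
    _ = R * D := mul_comm _ _
  set s := Real.sqrt (R * D) with hsdef
  have hs0 : 0 ≤ s := Real.sqrt_nonneg _
  have hs2 : s ^ 2 = R * D := Real.sq_sqrt (by positivity)
  have keyr : ∀ x : ℝ, ρ' x ≠ 0 → (r x) ^ 2 ≤ R * D ∧ |r x| ≤ s := by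
    intro x hx
    have hxR : |x| ≤ R := by
      have : x ∈ Metric.closedBall (0:ℝ) R :=
        hRsub (subset_tsupport ρ' hx)
      simpa [Metric.mem_closedBall, Real.dist_eq] using this
    refine ⟨key x hxR, ?_⟩
    rw [hsdef, ← Real.sqrt_sq_eq_abs]
    exact Real.sqrt_le_sqrt (key x hxR)
  set B := 2 * |a| * s + s ^ 2 with hBdef
  -- integrability of the pieces
  have hG2cs : HasCompactSupport (fun x => g * ρ' x * (2 * a * r x + r x ^ 2)) := by
    refine HasCompactSupport.intro hsupp fun x hx => ?_
    rw [image_eq_zero_of_notMem_tsupport hx]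
    ring
  have hG2cont : Continuous (fun x => g * ρ' x * (2 * a * r x + r x ^ 2)) :=
    (continuous_const.mul hcont).mul ((continuous_const.mul hrcont).add (hrcont.pow 2))
  have hG2int : Integrable (fun x => g * ρ' x * (2 * a * r x + r x ^ 2)) :=
    hG2cont.integrable_of_hasCompactSupport hG2cs
  have hG1int : Integrable (fun x => g * a ^ 2 * ρ' x) := hρint.const_mul _
  -- split the integral
  have hsplit : (∫ x, g * ρ' x * (ψ x) ^ 2)
      = (∫ x, g * a ^ 2 * ρ' x) + ∫ x, g * ρ' x * (2 * a * r x + r x ^ 2) := by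
    rw [← integral_add hG1int hG2int]
    refine integral_congr_ae (Filter.Eventually.of_forall fun x => ?_)
    show g * ρ' x * (ψ x) ^ 2 = g * a ^ 2 * ρ' x + g * ρ' x * (2 * a * r x + r x ^ 2)
    rw [hψeq x]; ring
  have hG1 : (∫ x, g * a ^ 2 * ρ' x) = g * a ^ 2 * I := by
    rw [hIdef]
    exact integral_const_mul _ _
  have hG2 : (∫ x, g * ρ' x * (2 * a * r x + r x ^ 2)) ≤ g * B * L := by
    have hRHSint : Integrable (fun x => g * B * |ρ' x|) := hρint.abs.const_mul _
    have hpt : ∀ x, g * ρ' x * (2 * a * r x + r x ^ 2) ≤ g * B * |ρ' x| := by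
      intro x
      by_cases hx : ρ' x = 0
      · simp [hx]
      · obtain ⟨h1, h2⟩ := keyr x hx
        have habs : |2 * a * r x + r x ^ 2| ≤ B := by
          calc |2 * a * r x + r x ^ 2| ≤ |2 * a * r x| + |r x ^ 2| := abs_add_le _ _
          _ = 2 * |a| * |r x| + r x ^ 2 := by
            rw [abs_mul, abs_mul, abs_two, abs_pow, sq_abs]
          _ ≤ 2 * |a| * s + s ^ 2 := by
            have := hs2
            nlinarith [abs_nonneg a, abs_nonneg (r x)]
        calc g * ρ' x * (2 * a * r x + r x ^ 2)
            ≤ |g * ρ' x * (2 * a * r x + r x ^ 2)| := le_abs_self _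
        _ = g * |ρ' x| * |2 * a * r x + r x ^ 2| := by
            rw [abs_mul, abs_mul, abs_of_pos hg]
        _ ≤ g * |ρ' x| * B := by
            have h0 : 0 ≤ g * |ρ' x| := by positivity
            exact mul_le_mul_of_nonneg_left habs h0
        _ = g * B * |ρ' x| := by ring
    calc (∫ x, g * ρ' x * (2 * a * r x + r x ^ 2)) ≤ ∫ x, g * B * |ρ' x| :=
      integral_mono hG2int hRHSint hpt
    _ = g * B * L := by rw [hLdef]; exact integral_const_mul _ _
  -- combine
  rw [hsplit, hG1]
  have hQ : (L ^ 2 / (-I)) * (-I) = L ^ 2 := div_mul_cancel₀ _ (ne_of_gt hmI)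
  have key2 : |a| ^ 2 * I + 2 * |a| * s * L ≤ (L ^ 2 / (-I)) * s ^ 2 := by
    rw [div_mul_eq_mul_div, le_div_iff₀ hmI]
    nlinarith [sq_nonneg (I * |a| + L * s)]
  have h6 := mul_le_mul_of_nonneg_left key2 hg.le
  have hfin : g * a ^ 2 * I + g * B * L ≤ g * R * (L ^ 2 / (-I) + L) * D := by
    calc g * a ^ 2 * I + g * B * L
        = g * (|a| ^ 2 * I + 2 * |a| * s * L) + g * L * s ^ 2 := by
          rw [hBdef, ← sq_abs a]; ring
    _ ≤ g * ((L ^ 2 / (-I)) * s ^ 2) + g * L * s ^ 2 := by linarith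
    _ = g * R * (L ^ 2 / (-I) + L) * D := by rw [hs2]; ring
  exact le_trans (add_le_add_right hG2 _) hfin
end

section
/- Suppose ψ_n ∈ H¹(ℝ) with ‖ψ_n'‖_{L²(ℝ)} → 0 as n → ∞, and suppose the values ψ_n(0) are uniformly bounded. Then for any continuous compactly supported function w with ∫_ℝ w dx < 0, one has limsup_n ∫_ℝ w ψ_n² dx ≤ 0. In particular it is impossible that ∫_ℝ w ψ_n² dx = 1 for all n. -/
open MeasureTheory Filter

lemma cs_key (f : ℝ → ℝ) (hf : MemLp f 2 volume) (x : ℝ) :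
    |∫ t in (0:ℝ)..x, f t| ≤ Real.sqrt (∫ t, f t ^ 2) * Real.sqrt |x| := by
  have hnn : 0 ≤ ∫ t, f t ^ 2 := integral_nonneg fun t => sq_nonneg _
  have hvol : volume (Set.uIoc (0:ℝ) x) = ENNReal.ofReal |x| := by
    rw [Set.uIoc, Real.volume_Ioc]
    congr 1
    rcases le_total 0 x with h | h
    · simp [abs_of_nonneg h, max_eq_right h, min_eq_left h]
    · simp [abs_of_nonpos h, max_eq_left h, min_eq_right h]
  set μ := volume.restrict (Set.uIoc (0:ℝ) x) with hμ
  haveI : IsFiniteMeasure μ := by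
    constructor
    rw [hμ, Measure.restrict_apply_univ, hvol]
    exact ENNReal.ofReal_lt_top
  have hpq : Real.HolderConjugate 2 2 := Real.HolderConjugate.two_two
  have hf2 : MemLp f (ENNReal.ofReal 2) μ := by
    rw [show ENNReal.ofReal 2 = 2 by norm_num]
    exact hf.restrict _
  have hg2 : MemLp (fun _ => (1:ℝ)) (ENNReal.ofReal 2) μ := memLp_const 1
  have H := integral_mul_norm_le_Lp_mul_Lq hpq hf2 hg2
  simp only [norm_one, mul_one, one_pow, Real.one_rpow] at H
  have h1 : ∫ _a, (1:ℝ) ∂μ = |x| := by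
    rw [integral_const, smul_eq_mul, mul_one, hμ, measureReal_def, Measure.restrict_apply_univ, hvol,
      ENNReal.toReal_ofReal (abs_nonneg x)]
  have hnorm2 : ∀ a : ℝ, ‖f a‖ ^ (2:ℝ) = f a ^ 2 := by
    intro a
    rw [show ((2:ℝ)) = ((2:ℕ):ℝ) by norm_num, Real.rpow_natCast, Real.norm_eq_abs, sq_abs]
  simp only [hnorm2] at H

  rw [h1] at H
  have hset : ∫ a, f a ^ 2 ∂μ ≤ ∫ t, f t ^ 2 := by
    apply setIntegral_le_integral hf.integrable_sq
    exact Eventually.of_forall fun t => sq_nonneg _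
  calc |∫ t in (0:ℝ)..x, f t| ≤ ∫ t in Set.uIoc (0:ℝ) x, ‖f t‖ ∂volume := by
        simpa using intervalIntegral.norm_integral_le_integral_norm_uIoc (f := f) (a := 0) (b := x)
    _ ≤ (∫ a, f a ^ 2 ∂μ) ^ ((1:ℝ)/2) * |x| ^ ((1:ℝ)/2) := H
    _ ≤ (∫ t, f t ^ 2) ^ ((1:ℝ)/2) * |x| ^ ((1:ℝ)/2) := by
        apply mul_le_mul_of_nonneg_right _ (Real.rpow_nonneg (abs_nonneg x) _)
        exact Real.rpow_le_rpow (integral_nonneg fun a => sq_nonneg _) hset (by norm_num)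
    _ = Real.sqrt (∫ t, f t ^ 2) * Real.sqrt |x| := by
        rw [Real.sqrt_eq_rpow, Real.sqrt_eq_rpow]

/-- If `ψ_n ∈ H¹(ℝ)`, `‖ψ_n'‖_{L²} → 0` and `ψ_n(0)` is uniformly bounded, then for any
`w ∈ C⁰_c(ℝ)` with `∫ w < 0` one has `limsup_n ∫ w ψ_n² ≤ 0`; in particular it is impossible
that `∫ w ψ_n² = 1` for all `n`. -/
theorem statement2 (ψ ψ' : ℕ → ℝ → ℝ) (hH1 : ∀ n, IsH1 (ψ n) (ψ' n))
    (hderiv : Tendsto (fun n => ∫ x, (ψ' n x) ^ 2) atTop (nhds 0))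
    (hbdd : ∃ c : ℝ, ∀ n, |ψ n 0| ≤ c)
    (w : ℝ → ℝ) (hw : Continuous w) (hwsupp : HasCompactSupport w)
    (hwneg : (∫ x, w x) < 0) :
    limsup (fun n => ∫ x, w x * (ψ n x) ^ 2) atTop ≤ 0 ∧
      ¬ (∀ n, (∫ x, w x * (ψ n x) ^ 2) = 1) := by
  obtain ⟨c, hc⟩ := hbdd
  have hc0 : 0 ≤ c := (abs_nonneg _).trans (hc 0)
  set u := fun n => ∫ x, w x * (ψ n x) ^ 2 with hu
  set r := fun n x => ∫ t in (0:ℝ)..x, ψ' n t with hrdef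
  set ε := fun n => Real.sqrt (∫ x, (ψ' n x) ^ 2) with hε
  have hεnn : ∀ n, 0 ≤ ε n := fun n => Real.sqrt_nonneg _
  have hεlim : Tendsto ε atTop (nhds 0) := by
    have := (Real.continuous_sqrt.tendsto 0).comp hderiv
    simpa [hε, Function.comp_def] using this
  have hr : ∀ n x, |r n x| ≤ ε n * Real.sqrt |x| := fun n x =>
    cs_key (ψ' n) (hH1 n).2.1 x
  -- continuity of ψ n
  have hψc : ∀ n, Continuous (ψ n) := by
    intro n
    have hloc : LocallyIntegrable (ψ' n) volume :=
      (hH1 n).2.1.locallyIntegrable (by norm_num)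
    have hii : ∀ a b : ℝ, IntervalIntegrable (ψ' n) volume a b := by
      intro a b
      rw [intervalIntegrable_iff]
      exact (hloc.integrableOn_isCompact isCompact_uIcc).mono_set Set.uIoc_subset_uIcc
    have hcont : Continuous fun x => ψ n 0 + ∫ t in (0:ℝ)..x, ψ' n t :=
      continuous_const.add (intervalIntegral.continuous_primitive hii 0)
    have : ψ n = fun x => ψ n 0 + ∫ t in (0:ℝ)..x, ψ' n t := funext fun x => (hH1 n).2.2 x
    rw [this]; exact hcont
  have hrc : ∀ n, Continuous (r n) := by
    intro n
    have : r n = fun x => ψ n x - ψ n 0 := funext fun x => by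
      have := (hH1 n).2.2 x; simp [hrdef]; linarith
    rw [this]; exact (hψc n).sub continuous_const
  -- integrabilities
  have hwInt : Integrable w := hw.integrable_of_hasCompactSupport hwsupp
  have hInt : ∀ n, Integrable (fun x => w x * ψ n x ^ 2) := fun n =>
    (hw.mul ((hψc n).pow 2)).integrable_of_hasCompactSupport (hwsupp.mul_right)
  have hsqc : Continuous (fun x : ℝ => Real.sqrt |x|) := Real.continuous_sqrt.comp continuous_abs
  have hAInt : Integrable (fun x => |w x| * Real.sqrt |x|) :=
    (hw.abs.mul hsqc).integrable_of_hasCompactSupport (hwsupp.abs.mul_right)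
  have hBInt : Integrable (fun x => |w x| * |x|) :=
    (hw.abs.mul continuous_abs).integrable_of_hasCompactSupport (hwsupp.abs.mul_right)
  set A := ∫ x, |w x| * Real.sqrt |x| with hA
  set B := ∫ x, |w x| * |x| with hB
  set g := fun n => ε n ^ 2 * B + 2 * c * ε n * A with hg
  -- main bound
  have hmain : ∀ n, u n ≤ g n := by
    intro n
    set a := ψ n 0 with ha
    have hψx : ∀ x, ψ n x = a + r n x := fun x => (hH1 n).2.2 x
    have hInt2 : Integrable (fun x => w x * (r n x * (r n x + 2 * a))) := by
      have heq : (fun x => w x * (r n x * (r n x + 2 * a)))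
          = fun x => w x * ψ n x ^ 2 - a ^ 2 * w x := funext fun x => by
        rw [hψx x]; ring
      rw [heq]; exact (hInt n).sub (hwInt.const_mul _)
    have hDInt : Integrable (fun x => |w x| *
        (ε n * Real.sqrt |x| * (ε n * Real.sqrt |x| + 2 * c))) := by
      have heq : (fun x => |w x| * (ε n * Real.sqrt |x| * (ε n * Real.sqrt |x| + 2 * c)))
          = fun x => ε n ^ 2 * (|w x| * |x|) + 2 * c * ε n * (|w x| * Real.sqrt |x|) :=
        funext fun x => by
          have h : Real.sqrt |x| * Real.sqrt |x| = |x| := Real.mul_self_sqrt (abs_nonneg x)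
          linear_combination (ε n ^ 2 * |w x|) * h
      rw [heq]
      exact (hBInt.const_mul _).add (hAInt.const_mul _)
    have hptw : ∀ x, |w x * (r n x * (r n x + 2 * a))| ≤
        |w x| * (ε n * Real.sqrt |x| * (ε n * Real.sqrt |x| + 2 * c)) := by
      intro x
      rw [abs_mul, abs_mul]
      apply mul_le_mul_of_nonneg_left _ (abs_nonneg _)
      apply mul_le_mul (hr n x) _ (abs_nonneg _)
        (mul_nonneg (hεnn n) (Real.sqrt_nonneg _))
      calc |r n x + 2 * a| ≤ |r n x| + 2 * |a| := by
            calc |r n x + 2 * a| ≤ |r n x| + |2 * a| := abs_add_le _ _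
              _ = |r n x| + 2 * |a| := by rw [abs_mul, abs_two]
        _ ≤ ε n * Real.sqrt |x| + 2 * c := by
            have := hr n x; have := hc n; linarith
    calc u n = ∫ x, (a ^ 2 * w x + w x * (r n x * (r n x + 2 * a))) := by
          apply integral_congr_ae
          exact Eventually.of_forall fun x => by show w x * ψ n x ^ 2 = a ^ 2 * w x + w x * (r n x * (r n x + 2 * a)); rw [hψx x]; ring
      _ = a ^ 2 * (∫ x, w x) + ∫ x, w x * (r n x * (r n x + 2 * a)) := by
          rw [integral_add (hwInt.const_mul _) hInt2, integral_const_mul]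
      _ ≤ 0 + ∫ x, w x * (r n x * (r n x + 2 * a)) := by
          apply add_le_add_left
          exact mul_nonpos_of_nonneg_of_nonpos (sq_nonneg a) hwneg.le
      _ ≤ |∫ x, w x * (r n x * (r n x + 2 * a))| := by
          rw [zero_add]; exact le_abs_self _
      _ ≤ ∫ x, |w x * (r n x * (r n x + 2 * a))| := by
          have := norm_integral_le_integral_norm (μ := volume)
            (f := fun x => w x * (r n x * (r n x + 2 * a)))
          simpa only [Real.norm_eq_abs] using this
      _ ≤ ∫ x, |w x| * (ε n * Real.sqrt |x| * (ε n * Real.sqrt |x| + 2 * c)) := by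
          apply integral_mono hInt2.abs hDInt hptw
      _ = g n := by
          have heq : (fun x => |w x| * (ε n * Real.sqrt |x| * (ε n * Real.sqrt |x| + 2 * c)))
              = fun x => ε n ^ 2 * (|w x| * |x|) + 2 * c * ε n * (|w x| * Real.sqrt |x|) :=
            funext fun x => by
              have h : Real.sqrt |x| * Real.sqrt |x| = |x| := Real.mul_self_sqrt (abs_nonneg x)
              linear_combination (ε n ^ 2 * |w x|) * h
          rw [heq, integral_add (hBInt.const_mul _) (hAInt.const_mul _),
            integral_const_mul, integral_const_mul]
  have hglim : Tendsto g atTop (nhds 0) := by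
    have h1 : Tendsto (fun n => ε n ^ 2 * B) atTop (nhds (0 ^ 2 * B)) :=
      (hεlim.pow 2).mul_const B
    have h2 : Tendsto (fun n => 2 * c * ε n * A) atTop (nhds (2 * c * 0 * A)) :=
      ((hεlim.const_mul (2 * c)).mul_const A)
    have := h1.add h2
    simpa using this
  have hlimsup : limsup u atTop ≤ 0 := by
    rw [limsup_eq]
    set S := {a : ℝ | ∀ᶠ n in atTop, u n ≤ a} with hS
    by_cases hbb : BddBelow S
    · have hmem : ∀ δ : ℝ, 0 < δ → δ ∈ S := by
        intro δ hδ
        have : ∀ᶠ n in atTop, g n < δ := hglim.eventually (eventually_lt_nhds hδ)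
        filter_upwards [this] with n hn
        exact (hmain n).trans hn.le
      by_contra hpos
      push_neg at hpos
      have h1 : sInf S ≤ sInf S / 2 := csInf_le hbb (hmem _ (by linarith))
      linarith
    · rw [Real.sInf_of_not_bddBelow hbb]
  refine ⟨hlimsup, ?_⟩
  intro hall
  have : u = fun _ => (1:ℝ) := funext hall
  rw [this, limsup_const] at hlimsup
  linarith
end

section
/- For each fixed ξ ∈ ℝ² with ξ₁ ≠ 0 and M ≠ 0 satisfying 0 < |M ξ₁|/|ξ| < M_c, the supremum S²(ξ) := sup over ψ ∈ H¹(ℝ) with ‖ψ‖_{L²(ℝ)} = 1 of Q(ψ) := (g|ξ|²/(Mξ₁)²) ∫_ℝ ρ̄' ψ² dx − ∫_ℝ |ψ'|² dx is achieved by some ψ₀ ∈ H¹(ℝ) with ‖ψ₀‖_{L²} = 1. -/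
open MeasureTheory Filter Topology intervalIntegral
open scoped RealInnerProductSpace


lemma weak_seq_compact {E : Type} [NormedAddCommGroup E] [InnerProductSpace ℝ E]
    [CompleteSpace E] (f : ℕ → E) (R : ℝ) (hb : ∀ n, ‖f n‖ ≤ R) :
    ∃ (w : E) (φ : ℕ → ℕ), StrictMono φ ∧
      ∀ v : E, Tendsto (fun n => ⟪f (φ n), v⟫) atTop (𝓝 ⟪w, v⟫) := by
  have hR0 : 0 ≤ R := le_trans (norm_nonneg (f 0)) (hb 0)
  -- diagonal extraction via compactness of product of intervals
  set F : ℕ → ℕ → ℝ := fun n m => ⟪f n, f m⟫ with hF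
  have hmem : ∀ n, F n ∈ Set.pi Set.univ (fun m => Set.Icc (-(R * ‖f m‖)) (R * ‖f m‖)) := by
    intro n m _
    have h1 : |⟪f n, f m⟫| ≤ ‖f n‖ * ‖f m‖ := abs_real_inner_le_norm _ _
    have h2 : ‖f n‖ * ‖f m‖ ≤ R * ‖f m‖ :=
      mul_le_mul_of_nonneg_right (hb n) (norm_nonneg _)
    have := abs_le.mp (h1.trans h2)
    exact ⟨this.1, this.2⟩
  have hcomp : IsCompact (Set.pi Set.univ (fun m => Set.Icc (-(R * ‖f m‖)) (R * ‖f m‖))) :=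
    isCompact_univ_pi (fun m => isCompact_Icc)
  obtain ⟨l, -, φ, hφ, hconv⟩ := hcomp.tendsto_subseq hmem
  have hconv' : ∀ m, Tendsto (fun n => ⟪f (φ n), f m⟫) atTop (𝓝 (l m)) := by
    intro m
    exact (tendsto_pi_nhds.mp hconv) m
  -- limits exist on the span
  set V : Submodule ℝ E := (Submodule.span ℝ (Set.range f)).topologicalClosure with hV
  have hspan : ∀ v ∈ Submodule.span ℝ (Set.range f),
      ∃ L : ℝ, Tendsto (fun n => ⟪f (φ n), v⟫) atTop (𝓝 L) := by
    intro v hv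
    induction hv using Submodule.span_induction with
    | mem x hx =>
        obtain ⟨m, rfl⟩ := hx
        exact ⟨l m, hconv' m⟩
    | zero => exact ⟨0, by simpa using tendsto_const_nhds⟩
    | add x y _ _ hx hy =>
        obtain ⟨Lx, hLx⟩ := hx; obtain ⟨Ly, hLy⟩ := hy
        exact ⟨Lx + Ly, by simpa [inner_add_right] using hLx.add hLy⟩
    | smul a x _ hx =>
        obtain ⟨Lx, hLx⟩ := hx
        exact ⟨a * Lx, by simpa [inner_smul_right] using hLx.const_mul a⟩
  -- limits exist on the closure of the span
  have hclos : ∀ v ∈ V, ∃ L : ℝ, Tendsto (fun n => ⟪f (φ n), v⟫) atTop (𝓝 L) := by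
    intro v hv
    have hcauchy : CauchySeq (fun n => ⟪f (φ n), v⟫) := by
      rw [Metric.cauchySeq_iff']
      intro ε hε
      have hv' : v ∈ closure ((Submodule.span ℝ (Set.range f)) : Set E) := hv
      obtain ⟨v', hv'mem, hv'close⟩ := Metric.mem_closure_iff.mp hv' (ε / (3 * (R + 1)))
        (by positivity)
      obtain ⟨L, hL⟩ := hspan v' hv'mem
      have hc : CauchySeq (fun n => ⟪f (φ n), v'⟫) := hL.cauchySeq
      obtain ⟨N, hN⟩ := Metric.cauchySeq_iff'.mp hc (ε / 3) (by positivity)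
      refine ⟨N, fun n hn => ?_⟩
      have key : ∀ k, |⟪f (φ k), v⟫ - ⟪f (φ k), v'⟫| ≤ R * (ε / (3 * (R + 1))) := by
        intro k
        rw [← inner_sub_right]
        refine (abs_real_inner_le_norm _ _).trans ?_
        have h1 : ‖f (φ k)‖ ≤ R := hb _
        have h2 : ‖v - v'‖ ≤ ε / (3 * (R + 1)) := by
          rw [← dist_eq_norm]; exact le_of_lt hv'close
        exact mul_le_mul h1 h2 (norm_nonneg _) hR0
      have hR3 : R * (ε / (3 * (R + 1))) < ε / 3 := by
        rw [← mul_div_assoc, div_lt_div_iff₀ (by positivity) (by norm_num)]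
        nlinarith
      have d1 := key n
      have d2 := key N
      have d3 := hN n hn
      rw [Real.dist_eq] at d3 ⊢
      have t1 := abs_sub_le (⟪f (φ n), v⟫) (⟪f (φ n), v'⟫) (⟪f (φ N), v⟫)
      have t2 := abs_sub_le (⟪f (φ n), v'⟫) (⟪f (φ N), v'⟫) (⟪f (φ N), v⟫)
      have t3 := abs_sub_comm (⟪f (φ N), v'⟫) (⟪f (φ N), v⟫)
      linarith
    obtain ⟨L, hL⟩ := cauchySeq_tendsto_of_complete hcauchy
    exact ⟨L, hL⟩
  -- limits exist everywhere via orthogonal projection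
  have hVclosed : IsClosed (V : Set E) := (Submodule.span ℝ (Set.range f)).isClosed_topologicalClosure
  haveI : CompleteSpace V := hVclosed.completeSpace_coe
  have hfV : ∀ n, f n ∈ V := fun n =>
    Submodule.le_topologicalClosure _ (Submodule.subset_span ⟨n, rfl⟩)
  have hall : ∀ v : E, ∃ L : ℝ, Tendsto (fun n => ⟪f (φ n), v⟫) atTop (𝓝 L) := by
    intro v
    set p : E := (V.orthogonalProjectionOnto v : E) with hp
    have hpV : p ∈ V := (V.orthogonalProjectionOnto v).2
    have hperp : v - p ∈ Vᗮ := Submodule.sub_starProjection_mem_orthogonal (K := V) v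
    have hinner : ∀ n, ⟪f n, v⟫ = ⟪f n, p⟫ := by
      intro n
      have h0 : ⟪f n, v - p⟫ = 0 := by
        exact hperp (f n) (hfV n)
      have := inner_sub_right (𝕜 := ℝ) (f n) v p
      linarith [this, h0]
    obtain ⟨L, hL⟩ := hclos p hpV
    exact ⟨L, by simpa only [hinner] using hL⟩
  -- build the weak limit via Riesz representation
  classical
  choose L hL using hall
  have hLadd : ∀ u v : E, L (u + v) = L u + L v := by
    intro u v
    have h1 : Tendsto (fun n => ⟪f (φ n), u + v⟫) atTop (𝓝 (L u + L v)) := by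
      simpa [inner_add_right] using (hL u).add (hL v)
    exact tendsto_nhds_unique (hL (u + v)) h1
  have hLsmul : ∀ (a : ℝ) (v : E), L (a • v) = a * L v := by
    intro a v
    have h1 : Tendsto (fun n => ⟪f (φ n), a • v⟫) atTop (𝓝 (a * L v)) := by
      simpa [inner_smul_right] using (hL v).const_mul a
    exact tendsto_nhds_unique (hL (a • v)) h1
  have hLbound : ∀ v : E, |L v| ≤ R * ‖v‖ := by
    intro v
    have h1 : ∀ n, |⟪f (φ n), v⟫| ≤ R * ‖v‖ := fun n =>
      (abs_real_inner_le_norm _ _).trans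
        (mul_le_mul_of_nonneg_right (hb _) (norm_nonneg _))
    have h2 : Tendsto (fun n => |⟪f (φ n), v⟫|) atTop (𝓝 |L v|) := (hL v).abs
    exact le_of_tendsto h2 (Eventually.of_forall h1)
  set Tlin : E →ₗ[ℝ] ℝ :=
    { toFun := L
      map_add' := hLadd
      map_smul' := hLsmul } with hT
  set T : E →L[ℝ] ℝ := Tlin.mkContinuous R (fun v => by
    rw [Real.norm_eq_abs]; exact hLbound v) with hTc
  refine ⟨(InnerProductSpace.toDual ℝ E).symm T, φ, hφ, fun v => ?_⟩
  have : ⟪(InnerProductSpace.toDual ℝ E).symm T, v⟫ = T v :=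
    InnerProductSpace.toDual_symm_apply
  rw [this]
  exact hL v

variable {μ : Measure ℝ}

lemma innerL2 {f g : ℝ → ℝ} (hf : MemLp f 2 μ) (hg : MemLp g 2 μ) :
    ⟪hf.toLp f, hg.toLp g⟫ = ∫ x, f x * g x ∂μ := by
  rw [L2.inner_def]
  apply MeasureTheory.integral_congr_ae
  filter_upwards [hf.coeFn_toLp, hg.coeFn_toLp] with x hx hy
  rw [hx, hy, RCLike.inner_apply, conj_trivial]
  ring

lemma normL2_sq {f : ℝ → ℝ} (hf : MemLp f 2 μ) :
    ‖hf.toLp f‖ ^ 2 = ∫ x, f x ^ 2 ∂μ := by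
  rw [← real_inner_self_eq_norm_sq, innerL2 hf hf]
  simp [sq]

lemma normL2_eq {f : ℝ → ℝ} (hf : MemLp f 2 μ) :
    ‖hf.toLp f‖ = Real.sqrt (∫ x, f x ^ 2 ∂μ) := by
  rw [← normL2_sq hf, Real.sqrt_sq (norm_nonneg _)]

-- interval integrability from MemLp 2
lemma IsH1.intervalIntegrable {f : ℝ → ℝ} (hf : MemLp f 2 (volume : Measure ℝ)) (a b : ℝ) :
    IntervalIntegrable f volume a b :=
  MeasureTheory.IntegrableOn.intervalIntegrable
    ((hf.locallyIntegrable (by norm_num)).integrableOn_isCompact isCompact_uIcc)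

-- Cauchy-Schwarz on an interval
lemma interval_CS {f : ℝ → ℝ} (hf : MemLp f 2 (volume : Measure ℝ)) {a b : ℝ} (hab : a ≤ b) :
    |∫ t in a..b, f t| ≤ Real.sqrt (∫ x, f x ^ 2) * Real.sqrt (b - a) := by
  have hres : MemLp f 2 (volume.restrict (Set.Ioc a b)) := hf.restrict _
  have hone : MemLp (fun _ : ℝ => (1:ℝ)) 2 (volume.restrict (Set.Ioc a b)) := by
    apply memLp_const
  have hinner := innerL2 hres hone
  have h1 : ∫ t in a..b, f t = ∫ x, f x * 1 ∂(volume.restrict (Set.Ioc a b)) := by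
    rw [intervalIntegral.integral_of_le hab]
    simp
  rw [h1, ← hinner]
  refine (abs_real_inner_le_norm _ _).trans ?_
  have h2 : ‖hres.toLp f‖ ≤ Real.sqrt (∫ x, f x ^ 2) := by
    rw [normL2_eq hres]
    apply Real.sqrt_le_sqrt
    have hint : Integrable (fun x => f x ^ 2) volume := hf.integrable_sq
    have := setIntegral_le_integral (s := Set.Ioc a b) hint
      (Eventually.of_forall fun x => sq_nonneg _)
    exact this
  have h3 : ‖hone.toLp (fun _ => (1:ℝ))‖ = Real.sqrt (b - a) := by
    rw [normL2_eq hone]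
    simp [Real.volume_Ioc, ENNReal.toReal_ofReal (sub_nonneg.mpr hab), max_eq_left (sub_nonneg.mpr hab)]
  rw [h3]
  exact mul_le_mul_of_nonneg_right h2 (Real.sqrt_nonneg _)

lemma IsH1.continuous {ψ ψ' : ℝ → ℝ} (h : IsH1 ψ ψ') : Continuous ψ := by
  have hprim : Continuous fun x => ∫ t in (0:ℝ)..x, ψ' t :=
    intervalIntegral.continuous_primitive (fun a b => IsH1.intervalIntegrable h.2.1 a b) 0
  have : ψ = fun x => ψ 0 + ∫ t in (0:ℝ)..x, ψ' t := funext h.2.2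
  rw [this]
  exact continuous_const.add hprim

lemma IsH1.diff {ψ ψ' : ℝ → ℝ} (h : IsH1 ψ ψ') (a b : ℝ) :
    ψ b - ψ a = ∫ t in a..b, ψ' t := by
  rw [h.2.2 a, h.2.2 b]
  have := intervalIntegral.integral_interval_sub_left
    (IsH1.intervalIntegrable h.2.1 0 b) (IsH1.intervalIntegrable h.2.1 0 a)
  linarith [this]

lemma IsH1.holder {ψ ψ' : ℝ → ℝ} (h : IsH1 ψ ψ') (a b : ℝ) :
    |ψ b - ψ a| ≤ Real.sqrt (∫ x, ψ' x ^ 2) * Real.sqrt |b - a| := by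
  rcases le_total a b with hab | hab
  · rw [IsH1.diff h a b, abs_of_nonneg (sub_nonneg.mpr hab)]
    exact interval_CS h.2.1 hab
  · rw [IsH1.diff h a b, abs_of_nonpos (sub_nonpos.mpr hab),
      intervalIntegral.integral_symm, abs_neg, show -(b - a) = a - b by ring]
    exact interval_CS h.2.1 hab

lemma IsH1.ptbound {ψ ψ' : ℝ → ℝ} (h : IsH1 ψ ψ') (hN : (∫ x, ψ x ^ 2) ≤ 1) :
    ∃ y ∈ Set.Icc (-1:ℝ) 0, ψ y ^ 2 ≤ 1 := by
  by_contra hcon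
  push_neg at hcon
  obtain ⟨y, hy, hmin⟩ := isCompact_Icc.exists_isMinOn
    (Set.nonempty_Icc.mpr (by norm_num : (-1:ℝ) ≤ 0))
    (((IsH1.continuous h).pow 2).continuousOn (s := Set.Icc (-1:ℝ) 0))
  have hm1 : 1 < ψ y ^ 2 := hcon y hy
  have hint : Integrable (fun x => ψ x ^ 2) volume := h.1.integrable_sq
  have h2 : ∫ x in Set.Icc (-1:ℝ) 0, ψ x ^ 2 ≤ ∫ x, ψ x ^ 2 :=
    setIntegral_le_integral hint (Eventually.of_forall fun x => sq_nonneg _)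
  have h3 : ψ y ^ 2 * (volume (Set.Icc (-1:ℝ) 0)).toReal ≤ ∫ x in Set.Icc (-1:ℝ) 0, ψ x ^ 2 :=
    setIntegral_ge_of_const_le_real measurableSet_Icc (by rw [Real.volume_Icc]; exact ENNReal.ofReal_ne_top)
      (fun x hx => hmin hx) (hint.integrableOn)
  have h4 : (volume (Set.Icc (-1:ℝ) 0)).toReal = 1 := by
    simp [Real.volume_Icc]
  rw [h4, mul_one] at h3
  linarith

lemma IsH1.globbound {ψ ψ' : ℝ → ℝ} (h : IsH1 ψ ψ') (hN : (∫ x, ψ x ^ 2) ≤ 1)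
    {R : ℝ} (hR : Real.sqrt (∫ x, ψ' x ^ 2) ≤ R) (x : ℝ) :
    |ψ x| ≤ 1 + R * Real.sqrt (|x| + 1) := by
  obtain ⟨y, hy, hy1⟩ := IsH1.ptbound h hN
  have h1 : |ψ y| ≤ 1 := by
    rw [← Real.sqrt_one, ← Real.sqrt_sq_eq_abs]
    exact Real.sqrt_le_sqrt hy1
  have h2 : |ψ x - ψ y| ≤ Real.sqrt (∫ t, ψ' t ^ 2) * Real.sqrt |x - y| := IsH1.holder h y x
  have hRnn : 0 ≤ R := le_trans (Real.sqrt_nonneg _) hR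
  have h3 : |x - y| ≤ |x| + 1 := by
    obtain ⟨ha, hb⟩ := hy
    have h5 := le_abs_self x
    have h6 := neg_abs_le x
    rw [abs_le]; constructor <;> linarith
  have h4 : Real.sqrt |x - y| ≤ Real.sqrt (|x| + 1) := Real.sqrt_le_sqrt h3
  have h5 : Real.sqrt (∫ t, ψ' t ^ 2) * Real.sqrt |x - y| ≤ R * Real.sqrt (|x| + 1) :=
    mul_le_mul hR h4 (Real.sqrt_nonneg _) hRnn
  calc |ψ x| ≤ |ψ y| + |ψ x - ψ y| := by
        have := abs_sub_abs_le_abs_sub (ψ x) (ψ y); linarith [abs_sub_le (ψ x) (ψ y) 0]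
    _ ≤ 1 + R * Real.sqrt (|x| + 1) := by linarith

lemma inner_toLp_indicator {f : ℝ → ℝ} (hf : MemLp f 2 (volume : Measure ℝ))
    {s : Set ℝ} (hs : MeasurableSet s) (hμs : volume s ≠ ⊤) :
    ⟪hf.toLp f,
      (memLp_indicator_const 2 hs (1:ℝ) (Or.inr hμs)).toLp (s.indicator fun _ => 1)⟫
      = ∫ x in s, f x := by
  rw [innerL2, ← MeasureTheory.integral_indicator hs]
  apply MeasureTheory.integral_congr_ae
  filter_upwards with x
  by_cases h : x ∈ s <;> simp [Set.indicator, h]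

/-- The functional `Q(ψ) = (g|ξ|²/(Mξ₁)²) ∫ ρ̄' ψ² − ∫ |ψ'|²`. -/
noncomputable def Qfun (g M ξ1 ξ2 : ℝ) (ρ' ψ ψ' : ℝ → ℝ) : ℝ :=
  g * (ξ1 ^ 2 + ξ2 ^ 2) / (M * ξ1) ^ 2 * (∫ x, ρ' x * (ψ x) ^ 2) - ∫ x, (ψ' x) ^ 2

set_option maxHeartbeats 1000000 in
/-- For fixed `ξ` with `ξ₁ ≠ 0`, `M ≠ 0`, and `0 < |Mξ₁|/|ξ| < M_c` (the latter expressed by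
the existence of a normalized `φ ∈ H¹(ℝ)` with `Q(φ) > 0`), the supremum
`S²(ξ) = sup {Q(ψ) : ψ ∈ H¹(ℝ), ‖ψ‖_{L²} = 1}` is achieved by some `ψ₀`. -/
theorem statement3 (g M ξ1 ξ2 : ℝ) (hg : 0 < g) (hM : M ≠ 0) (hξ1 : ξ1 ≠ 0)
    (ρ' : ℝ → ℝ) (hcont : Continuous ρ') (hsupp : HasCompactSupport ρ')
    (hMc : ∃ φ φ' : ℝ → ℝ, IsH1 φ φ' ∧ (∫ x, (φ x) ^ 2) = 1 ∧
      0 < Qfun g M ξ1 ξ2 ρ' φ φ') :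
    ∃ ψ₀ ψ₀' : ℝ → ℝ, IsH1 ψ₀ ψ₀' ∧ (∫ x, (ψ₀ x) ^ 2) = 1 ∧
      ∀ ψ ψ' : ℝ → ℝ, IsH1 ψ ψ' → (∫ x, (ψ x) ^ 2) = 1 →
        Qfun g M ξ1 ξ2 ρ' ψ ψ' ≤ Qfun g M ξ1 ξ2 ρ' ψ₀ ψ₀' := by
  classical
  obtain ⟨φ₀, φ₀', hφ₀, hφ₀N, hφ₀Q⟩ := hMc
  set c : ℝ := g * (ξ1 ^ 2 + ξ2 ^ 2) / (M * ξ1) ^ 2 with hc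
  have hcpos : 0 < c := by
    have h1 : 0 < ξ1 ^ 2 := pow_two_pos_of_ne_zero hξ1
    have h2 := sq_nonneg ξ2
    have h3 : 0 < (M * ξ1) ^ 2 := pow_two_pos_of_ne_zero (mul_ne_zero hM hξ1)
    exact div_pos (mul_pos hg (by linarith)) h3
  have hQdef : ∀ ψ ψ' : ℝ → ℝ, Qfun g M ξ1 ξ2 ρ' ψ ψ' =
      c * (∫ x, ρ' x * (ψ x) ^ 2) - ∫ x, (ψ' x) ^ 2 := fun _ _ => rfl
  -- bound for ρ'
  obtain ⟨Cρ, hCρ⟩ := hcont.bounded_above_of_compact_support hsupp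
  have hCρ0 : 0 ≤ Cρ := le_trans (norm_nonneg _) (hCρ 0)
  -- integrability and bound of the potential term
  have hAint : ∀ ψ : ℝ → ℝ, MemLp ψ 2 volume →
      Integrable (fun x => ρ' x * ψ x ^ 2) volume := by
    intro ψ hψ
    exact (hψ.integrable_sq).bdd_mul hcont.aestronglyMeasurable (Eventually.of_forall hCρ)
  have hAbound : ∀ ψ : ℝ → ℝ, MemLp ψ 2 volume →
      |∫ x, ρ' x * ψ x ^ 2| ≤ Cρ * ∫ x, ψ x ^ 2 := by
    intro ψ hψ
    have h1 : |∫ x, ρ' x * ψ x ^ 2| ≤ ∫ x, |ρ' x * ψ x ^ 2| := by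
      have := norm_integral_le_integral_norm (μ := volume) (fun x => ρ' x * ψ x ^ 2)
      simp only [Real.norm_eq_abs] at this
      exact this
    have h2 : ∫ x, |ρ' x * ψ x ^ 2| ≤ ∫ x, Cρ * ψ x ^ 2 := by
      apply integral_mono (hAint ψ hψ).abs ((hψ.integrable_sq).const_mul Cρ)
      intro x
      show |ρ' x * ψ x ^ 2| ≤ Cρ * ψ x ^ 2
      rw [abs_mul, abs_of_nonneg (sq_nonneg (ψ x))]
      have := hCρ x
      rw [Real.norm_eq_abs] at this
      exact mul_le_mul_of_nonneg_right this (sq_nonneg _)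
    rw [MeasureTheory.integral_const_mul] at h2
    linarith
  -- the supremum
  set 𝒮 : Set ℝ := {r | ∃ ψ ψ' : ℝ → ℝ, IsH1 ψ ψ' ∧ (∫ x, (ψ x) ^ 2) = 1 ∧
    r = Qfun g M ξ1 ξ2 ρ' ψ ψ'} with h𝒮
  have h𝒮ne : 𝒮.Nonempty := ⟨_, φ₀, φ₀', hφ₀, hφ₀N, rfl⟩
  have h𝒮bdd : BddAbove 𝒮 := by
    refine ⟨c * Cρ, fun r hr => ?_⟩
    obtain ⟨ψ, ψ', h1, h2, rfl⟩ := hr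
    have hB0 : 0 ≤ ∫ x, (ψ' x) ^ 2 := integral_nonneg fun x => sq_nonneg _
    have hA := hAbound ψ h1.1
    rw [h2, mul_one] at hA
    have := abs_le.mp hA
    rw [hQdef]
    nlinarith [hcpos.le]
  set S : ℝ := sSup 𝒮 with hS
  have hSpos : 0 < S :=
    lt_of_lt_of_le hφ₀Q (le_csSup h𝒮bdd ⟨φ₀, φ₀', hφ₀, hφ₀N, rfl⟩)
  -- minimizing sequence
  have hseq : ∀ n : ℕ, ∃ ψ ψ' : ℝ → ℝ, IsH1 ψ ψ' ∧ (∫ x, (ψ x) ^ 2) = 1 ∧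
      S - 1 / (n + 1) < Qfun g M ξ1 ξ2 ρ' ψ ψ' := by
    intro n
    have hlt : S - 1 / (n + 1 : ℝ) < S := by
      have : (0:ℝ) < 1 / (n + 1 : ℝ) := by positivity
      linarith
    obtain ⟨r, hr, hrgt⟩ := exists_lt_of_lt_csSup h𝒮ne hlt
    obtain ⟨ψ, ψ', h1, h2, rfl⟩ := hr
    exact ⟨ψ, ψ', h1, h2, hrgt⟩
  choose u u' hu hNu hQu using hseq
  have hQle : ∀ n, Qfun g M ξ1 ξ2 ρ' (u n) (u' n) ≤ S := fun n =>
    le_csSup h𝒮bdd ⟨u n, u' n, hu n, hNu n, rfl⟩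
  -- bounds on the derivative term
  have hB0 : ∀ n, 0 ≤ ∫ x, (u' n x) ^ 2 := fun n => integral_nonneg fun x => sq_nonneg _
  have hBb : ∀ n, (∫ x, (u' n x) ^ 2) ≤ c * Cρ + 1 - S := by
    intro n
    have h1 := hQu n
    rw [hQdef] at h1
    have hA := hAbound (u n) (hu n).1
    rw [hNu n, mul_one] at hA
    have h2 := (abs_le.mp hA).2
    have h3 : (1 : ℝ) / (n + 1) ≤ 1 := by
      rw [div_le_one (by positivity)]
      have : (0:ℝ) ≤ n := Nat.cast_nonneg n
      linarith
    nlinarith [hcpos.le]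
  set R : ℝ := Real.sqrt (c * Cρ + 1 - S) with hR
  have hRB : ∀ n, Real.sqrt (∫ x, (u' n x) ^ 2) ≤ R := fun n =>
    Real.sqrt_le_sqrt (hBb n)
  -- L² elements and weak compactness
  set F : ℕ → Lp ℝ 2 (volume : Measure ℝ) := fun n => ((hu n).2.1).toLp (u' n) with hF
  have hFnorm : ∀ n, ‖F n‖ = Real.sqrt (∫ x, (u' n x) ^ 2) := fun n => normL2_eq _
  obtain ⟨w, σ₁, hσ₁, hweak₁⟩ := weak_seq_compact F R (fun n => (hFnorm n) ▸ hRB n)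
  -- convergent subsequence of the values at 0
  have hu0 : ∀ n, u n 0 ∈ Set.Icc (-(1 + R)) (1 + R) := by
    intro n
    have := IsH1.globbound (hu n) (le_of_eq (hNu n)) (hRB n) 0
    rw [abs_zero, zero_add, Real.sqrt_one, mul_one] at this
    exact ⟨(abs_le.mp this).1, (abs_le.mp this).2⟩
  obtain ⟨a, -, σ₂, hσ₂, ha⟩ := isCompact_Icc.tendsto_subseq (fun n => hu0 (σ₁ n))
  set σ : ℕ → ℕ := σ₁ ∘ σ₂ with hσdef
  have hσ : StrictMono σ := hσ₁.comp hσ₂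
  have hweak : ∀ v : Lp ℝ 2 (volume : Measure ℝ),
      Tendsto (fun n => ⟪F (σ n), v⟫) atTop (𝓝 ⟪w, v⟫) := fun v =>
    (hweak₁ v).comp hσ₂.tendsto_atTop
  have ha' : Tendsto (fun n => u (σ n) 0) atTop (𝓝 a) := ha
  -- the limit function
  set wf : ℝ → ℝ := ⇑w with hwfdef
  have hwf : MemLp wf 2 volume := Lp.memLp w
  set ψL : ℝ → ℝ := fun x => a + ∫ t in (0:ℝ)..x, wf t with hψL
  -- pointwise convergence
  have hptwise : ∀ x : ℝ, Tendsto (fun n => u (σ n) x) atTop (𝓝 (ψL x)) := by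
    intro x
    rcases le_total 0 x with hx | hx
    · have hμs : volume (Set.Ioc (0:ℝ) x) ≠ ⊤ := by
        rw [Real.volume_Ioc]; exact ENNReal.ofReal_ne_top
      set v : Lp ℝ 2 (volume : Measure ℝ) :=
        (memLp_indicator_const 2 measurableSet_Ioc (1:ℝ) (Or.inr hμs)).toLp
          ((Set.Ioc (0:ℝ) x).indicator fun _ => 1) with hv
      have hrep : ∀ (f : ℝ → ℝ) (hf : MemLp f 2 volume),
          ⟪hf.toLp f, v⟫ = ∫ t in (0:ℝ)..x, f t := by
        intro f hf
        rw [hv, inner_toLp_indicator hf measurableSet_Ioc hμs,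
          intervalIntegral.integral_of_le hx]
      have h1 : ∀ n, u (σ n) x = u (σ n) 0 + ⟪F (σ n), v⟫ := by
        intro n
        rw [show F (σ n) = ((hu (σ n)).2.1).toLp (u' (σ n)) from rfl,
          hrep _ ((hu (σ n)).2.1)]
        exact (hu (σ n)).2.2 x
      have h2 : ψL x = a + ⟪w, v⟫ := by
        have h3 := hrep wf hwf
        have h4 : MemLp.toLp wf hwf = w := MeasureTheory.Lp.toLp_coeFn w hwf
        rw [h4] at h3
        rw [hψL, h3]
      rw [h2]
      exact (ha'.add (hweak v)).congr (fun n => (h1 n).symm)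
    · have hμs : volume (Set.Ioc x (0:ℝ)) ≠ ⊤ := by
        rw [Real.volume_Ioc]; exact ENNReal.ofReal_ne_top
      set v : Lp ℝ 2 (volume : Measure ℝ) :=
        (memLp_indicator_const 2 measurableSet_Ioc (1:ℝ) (Or.inr hμs)).toLp
          ((Set.Ioc x (0:ℝ)).indicator fun _ => 1) with hv
      have hrep : ∀ (f : ℝ → ℝ) (hf : MemLp f 2 volume),
          ⟪hf.toLp f, v⟫ = -∫ t in (0:ℝ)..x, f t := by
        intro f hf
        rw [hv, inner_toLp_indicator hf measurableSet_Ioc hμs,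
          ← intervalIntegral.integral_of_le hx, intervalIntegral.integral_symm]
      have h1 : ∀ n, u (σ n) x = u (σ n) 0 - ⟪F (σ n), v⟫ := by
        intro n
        rw [show F (σ n) = ((hu (σ n)).2.1).toLp (u' (σ n)) from rfl,
          hrep _ ((hu (σ n)).2.1)]
        rw [(hu (σ n)).2.2 x]; ring
      have h2 : ψL x = a - ⟪w, v⟫ := by
        have h3 := hrep wf hwf
        have h4 : MemLp.toLp wf hwf = w := MeasureTheory.Lp.toLp_coeFn w hwf
        rw [h4] at h3
        rw [hψL, h3]; ring
      rw [h2]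
      exact (ha'.sub (hweak v)).congr (fun n => (h1 n).symm)
  -- global bound for the sequence
  have hglob : ∀ n x, |u n x| ≤ 1 + R * Real.sqrt (|x| + 1) := fun n x =>
    IsH1.globbound (hu n) (le_of_eq (hNu n)) (hRB n) x
  obtain ⟨Lb, hLb⟩ := hsupp.isBounded.subset_closedBall 0
  set Kb : ℝ := 1 + R * Real.sqrt (Lb + 1) with hKb
  have hdom : ∀ n x, ‖ρ' x * (u (σ n) x) ^ 2‖ ≤ ‖ρ' x‖ * Kb ^ 2 := by
    intro n x
    by_cases hxs : x ∈ tsupport ρ'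
    · have h1 : |x| ≤ Lb := by
        have := hLb hxs
        rwa [Metric.mem_closedBall, Real.dist_eq, sub_zero] at this
      have hR0 : 0 ≤ R := Real.sqrt_nonneg _
      have h2 : |u (σ n) x| ≤ Kb := by
        refine (hglob (σ n) x).trans ?_
        rw [hKb]
        have h3 := Real.sqrt_le_sqrt (by linarith : |x| + 1 ≤ Lb + 1)
        nlinarith
      have hKb0 : 0 ≤ Kb := le_trans (abs_nonneg _) h2
      rw [norm_mul]
      refine mul_le_mul_of_nonneg_left ?_ (norm_nonneg _)
      rw [Real.norm_eq_abs, abs_of_nonneg (sq_nonneg _), ← sq_abs]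
      exact pow_le_pow_left₀ (abs_nonneg _) h2 2
    · have h0 : ρ' x = 0 := image_eq_zero_of_notMem_tsupport hxs
      rw [h0]
      simp
  have hbint : Integrable (fun x => ‖ρ' x‖ * Kb ^ 2) volume :=
    ((hcont.integrable_of_hasCompactSupport hsupp).norm).mul_const _
  set AL : ℝ := ∫ x, ρ' x * (ψL x) ^ 2 with hAL
  have hAconv : Tendsto (fun n => ∫ x, ρ' x * (u (σ n) x) ^ 2) atTop (𝓝 AL) := by
    apply tendsto_integral_of_dominated_convergence (fun x => ‖ρ' x‖ * Kb ^ 2)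
    · intro n
      exact (hAint _ (hu (σ n)).1).aestronglyMeasurable
    · exact hbint
    · intro n; exact Eventually.of_forall (hdom n)
    · apply Eventually.of_forall
      intro x
      exact ((hptwise x).pow 2).const_mul (ρ' x)
  -- convergence of Q along the subsequence
  have hQconv : Tendsto (fun n => Qfun g M ξ1 ξ2 ρ' (u (σ n)) (u' (σ n))) atTop (𝓝 S) := by
    have h1 : Tendsto (fun n : ℕ => 1 / (n + 1 : ℝ)) atTop (𝓝 0) :=
      tendsto_one_div_add_atTop_nhds_zero_nat
    have h2 : Tendsto (fun n : ℕ => (1 : ℝ) / (σ n + 1)) atTop (𝓝 0) :=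
      h1.comp hσ.tendsto_atTop
    have h0 : Tendsto (fun n : ℕ => S - 1 / (σ n + 1 : ℝ)) atTop (𝓝 S) := by
      simpa using tendsto_const_nhds.sub h2
    refine tendsto_of_tendsto_of_tendsto_of_le_of_le h0 tendsto_const_nhds ?_ ?_
    · intro n; exact (hQu (σ n)).le
    · intro n; exact hQle (σ n)
  -- convergence of the derivative integrals
  have hBrw : ∀ n, (∫ x, (u' n x) ^ 2)
      = c * (∫ x, ρ' x * (u n x) ^ 2) - Qfun g M ξ1 ξ2 ρ' (u n) (u' n) := by
    intro n; rw [hQdef]; ring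
  set β : ℝ := c * AL - S with hβ
  have hBconv : Tendsto (fun n => ∫ x, (u' (σ n) x) ^ 2) atTop (𝓝 β) := by
    have h1 := (hAconv.const_mul c).sub hQconv
    exact h1.congr fun n => (hBrw (σ n)).symm
  have hβ0 : 0 ≤ β :=
    le_of_tendsto_of_tendsto' tendsto_const_nhds hBconv (fun n => hB0 (σ n))
  -- the weak limit has norm at most √β
  have hwnorm : ‖w‖ ≤ Real.sqrt β := by
    have h1 : Tendsto (fun n => ⟪F (σ n), w⟫) atTop (𝓝 ⟪w, w⟫) := hweak w
    have h2 : ∀ n, ⟪F (σ n), w⟫ ≤ Real.sqrt (∫ x, (u' (σ n) x) ^ 2) * ‖w‖ := by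
      intro n
      have h3 := real_inner_le_norm (F (σ n)) w
      rwa [hFnorm (σ n)] at h3
    have h3 : Tendsto (fun n => Real.sqrt (∫ x, (u' (σ n) x) ^ 2) * ‖w‖) atTop
        (𝓝 (Real.sqrt β * ‖w‖)) :=
      ((Real.continuous_sqrt.tendsto β).comp hBconv).mul_const _
    have h4 : ⟪w, w⟫ ≤ Real.sqrt β * ‖w‖ := le_of_tendsto_of_tendsto' h1 h3 h2
    rw [real_inner_self_eq_norm_sq] at h4
    rcases eq_or_lt_of_le (norm_nonneg w) with h5 | h5
    · rw [← h5]; exact Real.sqrt_nonneg _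
    · nlinarith
  have hwsq : (∫ x, wf x ^ 2) ≤ β := by
    have h4 : MemLp.toLp wf hwf = w := MeasureTheory.Lp.toLp_coeFn w hwf
    have h1 : ‖w‖ ^ 2 = ∫ x, wf x ^ 2 := by rw [← h4]; exact normL2_sq hwf
    rw [← h1]
    calc ‖w‖ ^ 2 ≤ (Real.sqrt β) ^ 2 := pow_le_pow_left₀ (norm_nonneg _) hwnorm 2
      _ = β := Real.sq_sqrt hβ0
  -- ψL is square integrable with integral at most 1 (Fatou)
  have hψLcont : Continuous ψL := by
    have hprim : Continuous fun x => ∫ t in (0:ℝ)..x, wf t :=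
      intervalIntegral.continuous_primitive (fun a b => IsH1.intervalIntegrable hwf a b) 0
    exact continuous_const.add hprim
  have hlim_lint : (∫⁻ x, ENNReal.ofReal (ψL x ^ 2)) ≤ 1 := by
    have humeas : ∀ n, Measurable fun x => ENNReal.ofReal ((u (σ n) x) ^ 2) := fun n =>
      ENNReal.measurable_ofReal.comp (((IsH1.continuous (hu (σ n))).pow 2).measurable)
    have heq : ∀ x : ℝ, ENNReal.ofReal (ψL x ^ 2)
        = Filter.liminf (fun n => ENNReal.ofReal ((u (σ n) x) ^ 2)) atTop := fun x =>
      ((ENNReal.continuous_ofReal.tendsto _).comp ((hptwise x).pow 2)).liminf_eq.symm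
    calc (∫⁻ x, ENNReal.ofReal (ψL x ^ 2))
        = ∫⁻ x, Filter.liminf (fun n => ENNReal.ofReal ((u (σ n) x) ^ 2)) atTop :=
          lintegral_congr heq
      _ ≤ Filter.liminf (fun n => ∫⁻ x, ENNReal.ofReal ((u (σ n) x) ^ 2)) atTop :=
          lintegral_liminf_le humeas
      _ = 1 := by
          have hval : ∀ n, (∫⁻ x, ENNReal.ofReal ((u (σ n) x) ^ 2)) = 1 := by
            intro n
            rw [← ofReal_integral_eq_lintegral_ofReal ((hu (σ n)).1.integrable_sq)
              (Eventually.of_forall fun x => sq_nonneg _), hNu (σ n)]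
            exact ENNReal.ofReal_one
          simp only [hval]
          exact liminf_const 1
  have hψLsqint : Integrable (fun x => ψL x ^ 2) volume := by
    constructor
    · exact (hψLcont.pow 2).aestronglyMeasurable
    · rw [hasFiniteIntegral_iff_ofReal (Eventually.of_forall fun x => sq_nonneg _)]
      exact lt_of_le_of_lt hlim_lint ENNReal.one_lt_top
  set tL : ℝ := ∫ x, ψL x ^ 2 with htL
  have htL0 : 0 ≤ tL := integral_nonneg fun x => sq_nonneg _
  have htL1 : tL ≤ 1 := by
    have h1 : ENNReal.ofReal tL = ∫⁻ x, ENNReal.ofReal (ψL x ^ 2) :=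
      ofReal_integral_eq_lintegral_ofReal hψLsqint (Eventually.of_forall fun x => sq_nonneg _)
    have h2 : ENNReal.ofReal tL ≤ 1 := h1 ▸ hlim_lint
    exact ENNReal.ofReal_le_one.mp h2
  have hψLmem : MemLp ψL 2 volume :=
    (memLp_two_iff_integrable_sq hψLcont.aestronglyMeasurable).2 hψLsqint
  have hψLH1 : IsH1 ψL wf := by
    refine ⟨hψLmem, hwf, fun x => ?_⟩
    rw [hψL]
    simp
  -- positivity of the mass of the limit
  have hwf0 : 0 ≤ ∫ x, wf x ^ 2 := integral_nonneg fun x => sq_nonneg _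
  have hQL : S ≤ c * AL - ∫ x, wf x ^ 2 := by
    rw [hβ] at hwsq
    linarith
  have hALb : |AL| ≤ Cρ * tL := hAbound ψL hψLmem
  have htLpos : 0 < tL := by
    rcases htL0.lt_or_eq with h | h
    · exact h
    · exfalso
      rw [← h, mul_zero] at hALb
      have hAL0 : AL = 0 := abs_eq_zero.mp (le_antisymm hALb (abs_nonneg _))
      rw [hAL0, mul_zero] at hQL
      linarith
  -- the normalized maximizer
  set s0 : ℝ := (Real.sqrt tL)⁻¹ with hs0
  have hs0pos : 0 < s0 := inv_pos.mpr (Real.sqrt_pos.mpr htLpos)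
  have hs0sq : s0 ^ 2 = tL⁻¹ := by
    rw [hs0, inv_pow, Real.sq_sqrt htL0]
  have hs0mul : s0 ^ 2 * tL = 1 := by
    rw [hs0sq]
    exact inv_mul_cancel₀ (ne_of_gt htLpos)
  refine ⟨fun x => s0 * ψL x, fun x => s0 * wf x, ⟨?_, ?_, ?_⟩, ?_, ?_⟩
  · exact hψLmem.const_mul s0
  · exact hwf.const_mul s0
  · intro x
    rw [intervalIntegral.integral_const_mul]
    have h1 := hψLH1.2.2 x
    calc s0 * ψL x = s0 * (ψL 0 + ∫ t in (0:ℝ)..x, wf t) := by rw [← h1]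
      _ = s0 * ψL 0 + s0 * ∫ t in (0:ℝ)..x, wf t := by ring
  · rw [show (∫ x, (s0 * ψL x) ^ 2) = ∫ x, s0 ^ 2 * (ψL x ^ 2) from by
      congr 1; funext x; ring]
    rw [MeasureTheory.integral_const_mul, ← htL, hs0mul]
  · intro ψ ψ' hψ hψN
    have hle : Qfun g M ξ1 ξ2 ρ' ψ ψ' ≤ S := le_csSup h𝒮bdd ⟨ψ, ψ', hψ, hψN, rfl⟩
    refine hle.trans ?_
    have hA0 : (∫ x, ρ' x * (s0 * ψL x) ^ 2) = s0 ^ 2 * AL := by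
      rw [show (∫ x, ρ' x * (s0 * ψL x) ^ 2) = ∫ x, s0 ^ 2 * (ρ' x * ψL x ^ 2) from by
        congr 1; funext x; ring]
      rw [MeasureTheory.integral_const_mul, ← hAL]
    have hB0' : (∫ x, (s0 * wf x) ^ 2) = s0 ^ 2 * ∫ x, wf x ^ 2 := by
      rw [show (∫ x, (s0 * wf x) ^ 2) = ∫ x, s0 ^ 2 * (wf x ^ 2) from by
        congr 1; funext x; ring]
      rw [MeasureTheory.integral_const_mul]
    have hgoal : Qfun g M ξ1 ξ2 ρ' (fun x => s0 * ψL x) (fun x => s0 * wf x)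
        = s0 ^ 2 * (c * AL - ∫ x, wf x ^ 2) := by
      simp only [hQdef]
      rw [hA0, hB0']
      ring
    rw [hgoal]
    have h2 : 1 ≤ s0 ^ 2 := by
      nlinarith [hs0mul, htL1, sq_nonneg s0]
    nlinarith [hQL, hSpos, h2]
end
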